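/- Let V be a real vector space and consider the free monoid on the underlying set of V with rewriting rules: (v, w) rewrites to (v + w) whenever v and w are linearly dependent, and (0) rewrites to the empty word. If a word a rewrites in one step to b and in one step to b', then there exists a word c such that b rewrites (in zero or more steps) to c and b' rewrites (in zero or more steps) to c (local confluence of the rewriting system). -/

import Mathlib

/-!
STATEMENT 0: Local confluence of the rewriting system on the free monoid over a real
vector space `V`, with rules `(v, w) → (v + w)` for linearly dependent `v, w` and
`(0) → ε`.
-/

open FreeMonoid

variable (V : Type*) [AddCommGroup V] [Module ℝ V]

/-- A single rewriting step on words over `V`: replace an adjacent pair of linearly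
dependent letters by their sum, or delete a letter equal to `0`. -/
inductive PLStep : FreeMonoid V → FreeMonoid V → Prop
  | pair (a b : FreeMonoid V) (v w : V) (h : ¬ LinearIndependent ℝ ![v, w]) :
      PLStep (a * (of v * of w) * b) (a * of (v + w) * b)
  | zero (a b : FreeMonoid V) : PLStep (a * of (0 : V) * b) (a * b)

/-! ### Auxiliary linear-algebra lemmas -/

lemma dep_smul {V : Type*} [AddCommGroup V] [Module ℝ V] (w : V) (c d : ℝ) :
    ¬ LinearIndependent ℝ ![c • w, d • w] := by
  rw [LinearIndependent.pair_iff]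
  push_neg
  by_cases h0 : c = 0 ∧ d = 0
  · exact ⟨1, 0, by simp [h0.1, h0.2], by norm_num⟩
  · refine ⟨d, -c, ?_, fun hd hnc => h0 ⟨neg_eq_zero.mp hnc, hd⟩⟩
    rw [smul_smul, smul_smul, ← add_smul, show d * c + -c * d = 0 by ring, zero_smul]

lemma dep_comm {V : Type*} [AddCommGroup V] [Module ℝ V] {v w : V}
    (h : ¬ LinearIndependent ℝ ![v, w]) : ¬ LinearIndependent ℝ ![w, v] := by
  rw [LinearIndependent.pair_iff] at h ⊢
  push_neg at h ⊢
  obtain ⟨s, t, hst, hne⟩ := h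
  exact ⟨t, s, by rw [add_comm]; exact hst, fun ht hs => hne hs ht⟩

lemma eq_smul_of_dep {V : Type*} [AddCommGroup V] [Module ℝ V] {v w : V}
    (hw : w ≠ 0) (h : ¬ LinearIndependent ℝ ![v, w]) : ∃ α : ℝ, v = α • w := by
  rw [LinearIndependent.pair_iff] at h
  push_neg at h
  obtain ⟨s, t, hst, hne⟩ := h
  by_cases hs : s = 0
  · exfalso
    have ht := hne hs
    rw [hs, zero_smul, zero_add] at hst
    rcases smul_eq_zero.mp hst with h' | h'
    · exact ht h'
    · exact hw h'
  · refine ⟨-(t / s), ?_⟩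
    have hsv : s • v = -(t • w) := eq_neg_of_add_eq_zero_left hst
    calc v = (s⁻¹ * s) • v := by rw [inv_mul_cancel₀ hs, one_smul]
      _ = s⁻¹ • (s • v) := by rw [mul_smul]
      _ = s⁻¹ • (-(t • w)) := by rw [hsv]
      _ = -(t / s) • w := by
          rw [smul_neg, smul_smul, ← neg_smul]
          congr 1
          field_simp

/-! ### The list-level rewriting system -/

/-- The same rewriting system, phrased on lists. -/
inductive LS : List V → List V → Prop
  | pair (p q : List V) (v w : V) (h : ¬ LinearIndependent ℝ ![v, w]) :
      LS (p ++ v :: w :: q) (p ++ (v + w) :: q)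
  | zero (p q : List V) : LS (p ++ (0 : V) :: q) (p ++ q)

lemma LS_cases {a b : List V} (h : LS V a b) :
    (∃ p q v w, ¬ LinearIndependent ℝ ![v, w] ∧ a = p ++ v :: w :: q ∧ b = p ++ (v + w) :: q) ∨
    (∃ p q, a = p ++ (0 : V) :: q ∧ b = p ++ q) := by
  cases h with
  | pair p q v w h => exact Or.inl ⟨p, q, v, w, h, rfl, rfl⟩
  | zero p q => exact Or.inr ⟨p, q, rfl, rfl⟩

/-- Overlap/disjointness analysis: two `pair` redexes, the second one starting at or
after the first. -/
lemma aux_pp (p m q q' : List V) (v w v' w' : V)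
    (hvw : ¬ LinearIndependent ℝ ![v, w]) (hvw' : ¬ LinearIndependent ℝ ![v', w'])
    (heq : v :: w :: q = m ++ v' :: w' :: q') :
    ∃ c, Relation.ReflTransGen (LS V) (p ++ (v + w) :: q) c ∧
      Relation.ReflTransGen (LS V) ((p ++ m) ++ (v' + w') :: q') c := by
  rcases m with _ | ⟨x, _ | ⟨y, m⟩⟩
  · -- same redex
    simp only [List.nil_append, List.cons.injEq] at heq
    obtain ⟨rfl, rfl, rfl⟩ := heq
    exact ⟨p ++ (v + w) :: q, .refl, by simpa using Relation.ReflTransGen.refl⟩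
  · -- adjacent overlap: a = p ++ [v, w, w'] ++ q' with v' = w
    simp only [List.cons_append, List.nil_append, List.cons.injEq] at heq
    obtain ⟨rfl, rfl, rfl⟩ := heq
    by_cases hw : w = 0
    · subst hw
      refine ⟨p ++ v :: w' :: q', ?_, ?_⟩
      · simpa using Relation.ReflTransGen.refl (a := p ++ v :: w' :: q')
      · simpa using Relation.ReflTransGen.refl (a := p ++ v :: w' :: q')
    · obtain ⟨α, hv⟩ := eq_smul_of_dep hw hvw
      obtain ⟨β, hw'⟩ := eq_smul_of_dep hw (dep_comm hvw')
      have h1' : ¬ LinearIndependent ℝ ![v + w, w'] := by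
        rw [hv, hw']; simpa [add_smul] using dep_smul w (α + 1) β
      have h2' : ¬ LinearIndependent ℝ ![v, w + w'] := by
        rw [hv, hw']; simpa [add_smul] using dep_smul w α (1 + β)
      refine ⟨p ++ (v + w + w') :: q', Relation.ReflTransGen.single ?_, 
        Relation.ReflTransGen.single ?_⟩
      · exact LS.pair p q' (v + w) w' h1'
      · simpa [add_assoc] using LS.pair p q' v (w + w') h2'
  · -- disjoint
    simp only [List.cons_append, List.cons.injEq] at heq
    obtain ⟨rfl, rfl, rfl⟩ := heq
    refine ⟨p ++ (v + w) :: (m ++ (v' + w') :: q'), Relation.ReflTransGen.single ?_,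
      Relation.ReflTransGen.single ?_⟩
    · simpa using LS.pair (p ++ (v + w) :: m) q' v' w' hvw'
    · simpa using LS.pair p (m ++ (v' + w') :: q') v w hvw

/-- A `pair` redex followed (at or after) by a `zero` redex. -/
lemma aux_pz (p m q q' : List V) (v w : V)
    (hvw : ¬ LinearIndependent ℝ ![v, w])
    (heq : v :: w :: q = m ++ (0 : V) :: q') :
    ∃ c, Relation.ReflTransGen (LS V) (p ++ (v + w) :: q) c ∧
      Relation.ReflTransGen (LS V) ((p ++ m) ++ q') c := by
  rcases m with _ | ⟨x, _ | ⟨y, m⟩⟩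
  · -- v = 0
    simp only [List.nil_append, List.cons.injEq] at heq
    obtain ⟨rfl, rfl⟩ := heq
    refine ⟨p ++ w :: q, ?_, ?_⟩
    · simpa using Relation.ReflTransGen.refl (a := p ++ w :: q)
    · simpa using Relation.ReflTransGen.refl (a := p ++ w :: q)
  · -- w = 0
    simp only [List.cons_append, List.nil_append, List.cons.injEq] at heq
    obtain ⟨rfl, rfl, rfl⟩ := heq
    refine ⟨p ++ v :: q, ?_, ?_⟩
    · simpa using Relation.ReflTransGen.refl (a := p ++ v :: q)
    · simpa using Relation.ReflTransGen.refl (a := p ++ v :: q)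
  · -- disjoint
    simp only [List.cons_append, List.cons.injEq] at heq
    obtain ⟨rfl, rfl, rfl⟩ := heq
    refine ⟨p ++ (v + w) :: (m ++ q'), Relation.ReflTransGen.single ?_,
      Relation.ReflTransGen.single ?_⟩
    · simpa using LS.zero (p ++ (v + w) :: m) q'
    · simpa using LS.pair p (m ++ q') v w hvw

/-- A `zero` redex followed (at or after) by a `pair` redex. -/
lemma aux_zp (p m q q' : List V) (v' w' : V)
    (hvw' : ¬ LinearIndependent ℝ ![v', w'])
    (heq : (0 : V) :: q = m ++ v' :: w' :: q') :
    ∃ c, Relation.ReflTransGen (LS V) (p ++ q) c ∧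
      Relation.ReflTransGen (LS V) ((p ++ m) ++ (v' + w') :: q') c := by
  rcases m with _ | ⟨x, m⟩
  · -- v' = 0
    simp only [List.nil_append, List.cons.injEq] at heq
    obtain ⟨rfl, rfl⟩ := heq
    refine ⟨p ++ w' :: q', ?_, ?_⟩
    · exact .refl
    · simpa using Relation.ReflTransGen.refl (a := p ++ w' :: q')
  · -- disjoint
    simp only [List.cons_append, List.cons.injEq] at heq
    obtain ⟨rfl, rfl⟩ := heq
    refine ⟨p ++ (m ++ (v' + w') :: q'), Relation.ReflTransGen.single ?_,
      Relation.ReflTransGen.single ?_⟩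
    · simpa using LS.pair (p ++ m) q' v' w' hvw'
    · simpa using LS.zero p (m ++ (v' + w') :: q')

/-- Two `zero` redexes, the second one starting at or after the first. -/
lemma aux_zz (p m q q' : List V)
    (heq : (0 : V) :: q = m ++ (0 : V) :: q') :
    ∃ c, Relation.ReflTransGen (LS V) (p ++ q) c ∧
      Relation.ReflTransGen (LS V) ((p ++ m) ++ q') c := by
  rcases m with _ | ⟨x, m⟩
  · simp only [List.nil_append, List.cons.injEq, true_and] at heq
    subst heq
    exact ⟨p ++ q, .refl, by simpa using Relation.ReflTransGen.refl (a := p ++ q)⟩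
  · simp only [List.cons_append, List.cons.injEq] at heq
    obtain ⟨rfl, rfl⟩ := heq
    refine ⟨p ++ (m ++ q'), Relation.ReflTransGen.single ?_,
      Relation.ReflTransGen.single ?_⟩
    · simpa using LS.zero (p ++ m) q'
    · simpa using LS.zero p (m ++ q')

/-- Local confluence at the list level. -/
theorem ls_confl {a b b' : List V} (h1 : LS V a b) (h2 : LS V a b') :
    ∃ c, Relation.ReflTransGen (LS V) b c ∧ Relation.ReflTransGen (LS V) b' c := by
  rcases LS_cases V h1 with ⟨p, q, v, w, hvw, rfl, rfl⟩ | ⟨p, q, rfl, rfl⟩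
  · rcases LS_cases V h2 with ⟨p', q', v', w', hvw', heq, rfl⟩ | ⟨p', q', heq, rfl⟩
    · -- pair / pair
      rcases List.append_eq_append_iff.mp heq with ⟨m, rfl, heq2⟩ | ⟨m, rfl, heq2⟩
      · exact aux_pp V p m q q' v w v' w' hvw hvw' heq2
      · obtain ⟨c, hc1, hc2⟩ := aux_pp V p' m q' q v' w' v w hvw' hvw heq2
        exact ⟨c, hc2, hc1⟩
    · -- pair / zero
      rcases List.append_eq_append_iff.mp heq with ⟨m, rfl, heq2⟩ | ⟨m, rfl, heq2⟩
      · exact aux_pz V p m q q' v w hvw heq2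
      · obtain ⟨c, hc1, hc2⟩ := aux_zp V p' m q' q v w hvw heq2
        exact ⟨c, hc2, hc1⟩
  · rcases LS_cases V h2 with ⟨p', q', v', w', hvw', heq, rfl⟩ | ⟨p', q', heq, rfl⟩
    · -- zero / pair
      rcases List.append_eq_append_iff.mp heq with ⟨m, rfl, heq2⟩ | ⟨m, rfl, heq2⟩
      · exact aux_zp V p m q q' v' w' hvw' heq2
      · obtain ⟨c, hc1, hc2⟩ := aux_pz V p' m q' q v' w' hvw' heq2
        exact ⟨c, hc2, hc1⟩
    · -- zero / zero
      rcases List.append_eq_append_iff.mp heq with ⟨m, rfl, heq2⟩ | ⟨m, rfl, heq2⟩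
      · exact aux_zz V p m q q' heq2
      · obtain ⟨c, hc1, hc2⟩ := aux_zz V p' m q' q heq2
        exact ⟨c, hc2, hc1⟩

/-! ### Transfer between `FreeMonoid` and lists -/

lemma ls_of_pl {a b : FreeMonoid V} (h : PLStep V a b) : LS V (toList a) (toList b) := by
  cases h with
  | pair x y v w hvw => simpa using LS.pair (toList x) (toList y) v w hvw
  | zero x y => simpa using LS.zero (toList x) (toList y)

lemma pl_of_ls {l m : List V} (h : LS V l m) : PLStep V (ofList l) (ofList m) := by
  cases h with
  | pair p q v w hvw =>
    simpa only [ofList_append, ofList_cons, ← mul_assoc]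
      using PLStep.pair (ofList p) (ofList q) v w hvw
  | zero p q =>
    simpa only [ofList_append, ofList_cons, ← mul_assoc]
      using PLStep.zero (ofList p) (ofList q)

/-- Local confluence: if `a` rewrites in one step to `b` and in one step to `b'`,
then `b` and `b'` have a common reduct. -/
theorem local_confluence_of_PL_rewriting {a b b' : FreeMonoid V}
    (h1 : PLStep V a b) (h2 : PLStep V a b') :
    ∃ c : FreeMonoid V,
      Relation.ReflTransGen (PLStep V) b c ∧ Relation.ReflTransGen (PLStep V) b' c := by
  obtain ⟨c, hc, hc'⟩ := ls_confl V (ls_of_pl V h1) (ls_of_pl V h2)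
  refine ⟨ofList c, ?_, ?_⟩
  · simpa [Function.onFun] using Relation.ReflTransGen.lift ofList (fun _ _ h => pl_of_ls V h) _ _ hc
  · simpa [Function.onFun] using Relation.ReflTransGen.lift ofList (fun _ _ h => pl_of_ls V h) _ _ hc'
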